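/- Let independent Gaussian noise with standard deviation sigma/W(H) be added to each Haar wavelet coefficient H of the transform of a vector with m = 2^n elements, where W(H_0) = m for the base coefficient and W(H) = 2^{level(H)} for a detail coefficient at level l. Then each reconstructed entry of the inverse wavelet transform has noise variance at most ((2 + log2(m))/2) * sigma^2. -/

import Mathlib

open MeasureTheory ProbabilityTheory

/-- Wavelet noise injection variance bound.  Independent Gaussian noise with
standard deviation `σ / W(H)` is added to each Haar coefficient of the
transform of a vector with `m = 2^n` elements, where `W(H₀) = m` for the base
coefficient and `W(H) = 2^l` for a detail coefficient at level `l`.  The noise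
of a reconstructed entry is the base noise plus the signed sum of the noises of
the `n = log2 m` ancestral detail coefficients (with signs `±1`); its variance
is at most `((2 + log2 m) / 2) * σ²`. -/
theorem wavelet_reconstruction_noise_variance
    {Ω : Type*} [MeasureSpace Ω] [IsProbabilityMeasure (ℙ : Measure Ω)]
    (n : ℕ) (σ : ℝ)
    (e₀ : Ω → ℝ) (e : ℕ → Ω → ℝ)
    (hmem₀ : MemLp e₀ 2 ℙ) (hmem : ∀ l, MemLp (e l) 2 ℙ)
    (hindep₀ : ∀ l, IndepFun e₀ (e l) ℙ)
    (hindep : ∀ l l', l ≠ l' → IndepFun (e l) (e l') ℙ)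
    (hvar₀ : variance e₀ ℙ = (σ / (2 ^ n : ℝ)) ^ 2)
    (hvar : ∀ l < n, variance (e l) ℙ = (σ / (2 ^ (l + 1) : ℝ)) ^ 2)
    (s : ℕ → ℝ) (hs : ∀ l, s l = 1 ∨ s l = -1) :
    variance (fun ω => e₀ ω + ∑ l ∈ Finset.range n, s l * e l ω) ℙ
      ≤ ((2 + (n : ℝ)) / 2) * σ ^ 2 := by
  classical
  set Y : ℕ → Ω → ℝ := fun i => match i with
    | 0 => e₀
    | l + 1 => fun ω => s l * e l ω with hY
  have hfun : (fun ω => e₀ ω + ∑ l ∈ Finset.range n, s l * e l ω)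
      = ∑ i ∈ Finset.range (n + 1), Y i := by
    funext ω
    rw [Finset.sum_apply, Finset.sum_range_succ']
    simp [hY, add_comm]
  have hmemY : ∀ i ∈ Finset.range (n + 1), MemLp (Y i) 2 ℙ := by
    rintro (_ | l) _
    · exact hmem₀
    · exact (hmem l).const_mul (s l)
  have hpair : Set.Pairwise ↑(Finset.range (n + 1))
      fun i j => IndepFun (Y i) (Y j) ℙ := by
    rintro (_ | i) _ (_ | j) _ hij
    · exact absurd rfl hij
    · exact (hindep₀ j).comp measurable_id (measurable_const_mul (s j))
    · exact ((hindep₀ i).comp measurable_id (measurable_const_mul (s i))).symm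
    · exact (hindep i j (by omega)).comp (measurable_const_mul (s i))
        (measurable_const_mul (s j))
  rw [hfun, IndepFun.variance_sum hmemY hpair, Finset.sum_range_succ']
  have hσ : (0:ℝ) ≤ σ ^ 2 := sq_nonneg σ
  have h1 : variance (Y 0) ℙ ≤ σ ^ 2 := by
    simp only [hY, hvar₀, div_pow]
    have h2 : (1:ℝ) ≤ (2 ^ n) ^ 2 := one_le_pow₀ (one_le_pow₀ one_le_two)
    exact div_le_self hσ h2
  have h2 : ∀ l ∈ Finset.range n, variance (Y (l + 1)) ℙ ≤ σ ^ 2 / 2 := by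
    intro l hl
    have : variance (Y (l + 1)) ℙ = (s l) ^ 2 * variance (e l) ℙ := by
      simpa using variance_const_mul (s l) (e l) ℙ
    rw [this, hvar l (Finset.mem_range.mp hl)]
    have hsl : (s l) ^ 2 = 1 := by rcases hs l with h | h <;> simp [h]
    rw [hsl, one_mul, div_pow]
    have h2pow : (2:ℝ) ≤ ((2:ℝ) ^ (l + 1)) ^ 2 := by
      have h : (2:ℝ) ^ 1 ≤ 2 ^ (l + 1) := pow_le_pow_right₀ one_le_two (by omega)
      nlinarith
    exact div_le_div_of_nonneg_left hσ (by norm_num) h2pow |>.trans_eq rfl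
  calc (∑ l ∈ Finset.range n, variance (Y (l + 1)) ℙ) + variance (Y 0) ℙ
      ≤ (∑ l ∈ Finset.range n, σ ^ 2 / 2) + σ ^ 2 :=
        add_le_add (Finset.sum_le_sum h2) h1
    _ ≤ ((2 + (n : ℝ)) / 2) * σ ^ 2 := by
      rw [Finset.sum_const, Finset.card_range]
      ring_nf
      nlinarith [hσ]
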